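/- Let X := {x_r : r ∈ ℝ} ∪ {y_r : r ∈ ℝ} ∪ {s, t} (formally, the type (ℝ × Bool) ⊕ Bool of generators). For a finite tuple r̄ = (r_1, …, r_d) of real numbers define, in the free group on X, v_{r̄} := x_{r_d}^{-1} ⋯ x_{r_1}^{-1} · s · x_{r_1} ⋯ x_{r_d} and w_{r̄} := y_{r_d}^{-1} ⋯ y_{r_1}^{-1} · t · y_{r_1} ⋯ y_{r_d}. Then for every set S of finite real tuples and every finite real tuple r̄, the images of v_{r̄} and w_{r̄} in the presented group ⟨X | {v_{s̄} · w_{s̄}^{-1} : s̄ ∈ S}⟩ are equal if and only if r̄ ∈ S. -/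

import Mathlib

/-- The generating set `X = {x_r : r ∈ ℝ} ∪ {y_r : r ∈ ℝ} ∪ {s, t}`:
`Sum.inl (r, true)` is `x_r`, `Sum.inl (r, false)` is `y_r`,
`Sum.inr true` is `s`, and `Sum.inr false` is `t`. -/
abbrev Gen16 : Type := (ℝ × Bool) ⊕ Bool

def xgen (r : ℝ) : FreeGroup Gen16 := FreeGroup.of (Sum.inl (r, true))
def ygen (r : ℝ) : FreeGroup Gen16 := FreeGroup.of (Sum.inl (r, false))
def sgen : FreeGroup Gen16 := FreeGroup.of (Sum.inr true)
def tgen : FreeGroup Gen16 := FreeGroup.of (Sum.inr false)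

/-- The word `v_{r̄} := x_{r_d}⁻¹ ⋯ x_{r_1}⁻¹ · s · x_{r_1} ⋯ x_{r_d}`. -/
def vword (r : List ℝ) : FreeGroup Gen16 :=
  ((r.map xgen).prod)⁻¹ * sgen * (r.map xgen).prod

/-- The word `w_{r̄} := y_{r_d}⁻¹ ⋯ y_{r_1}⁻¹ · t · y_{r_1} ⋯ y_{r_d}`. -/
def wword16 (r : List ℝ) : FreeGroup Gen16 :=
  ((r.map ygen).prod)⁻¹ * tgen * (r.map ygen).prod

/-- The relator set `{v_{s̄}·w_{s̄}⁻¹ : s̄ ∈ S}` for a set `S` of finite real tuples. -/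
def rels16 (S : Set (List ℝ)) : Set (FreeGroup Gen16) :=
  {g | ∃ sb ∈ S, g = vword sb * (wword16 sb)⁻¹}


noncomputable section PfAux

abbrev Q16 : Type := FreeGroup ℝ

def plist (l : List ℝ) : Q16 := (l.map FreeGroup.of).prod

lemma plist_eq_mk (l : List ℝ) : plist l = FreeGroup.mk (l.map fun a => (a, true)) := by
  induction l with
  | nil => rfl
  | cons a l ih =>
      simp only [plist, List.map_cons, List.prod_cons] at *
      rw [ih, FreeGroup.of, FreeGroup.mul_mk]
      rfl

lemma reduce_pos (l : List ℝ) :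
    FreeGroup.reduce (l.map fun a => (a, true)) = l.map fun a => (a, true) := by
  induction l with
  | nil => rfl
  | cons a l ih =>
      rw [List.map_cons, FreeGroup.reduce.cons, ih]
      cases l with
      | nil => rfl
      | cons b l => simp

lemma plist_injective : Function.Injective plist := by
  intro l₁ l₂ h
  have h2 := congrArg FreeGroup.toWord h
  rw [plist_eq_mk, plist_eq_mk, FreeGroup.toWord_mk, FreeGroup.toWord_mk,
    reduce_pos, reduce_pos] at h2
  have : Function.Injective (fun a : ℝ => (a, true)) := fun a b hab => congrArg Prod.fst hab
  exact List.map_injective_iff.2 this h2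

lemma freeGroup_map_injective {α β : Type} {f : α → β} (hf : Function.Injective f) :
    Function.Injective (FreeGroup.map f) := by
  classical
  set g : β → FreeGroup α := fun b =>
    if h : ∃ a, f a = b then FreeGroup.of h.choose else 1 with hg
  have key : ∀ x : FreeGroup α, FreeGroup.lift g (FreeGroup.map f x) = x := by
    intro x
    induction x using FreeGroup.induction_on with
    | C1 => simp
    | of a =>
        show FreeGroup.lift g (FreeGroup.map f (FreeGroup.of a)) = FreeGroup.of a
        rw [FreeGroup.map.of, FreeGroup.lift_apply_of, hg]
        have h : ∃ a', f a' = f a := ⟨a, rfl⟩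
        show (if h : ∃ a', f a' = f a then FreeGroup.of h.choose else 1) = FreeGroup.of a
        rw [dif_pos h]
        exact congrArg FreeGroup.of (hf h.choose_spec)
    | inv_of a ih => simp only [_root_.map_inv, inv_inj]; exact ih
    | mul x y hx hy => simp only [_root_.map_mul, hx, hy]
  intro x y hxy
  rw [← key x, ← key y, hxy]

def actQ : Q16 →* MulAut (FreeGroup Q16) where
  toFun q := FreeGroup.freeGroupCongr (Equiv.mulRight q⁻¹)
  map_one' := by
    show FreeGroup.freeGroupCongr (Equiv.mulRight ((1 : Q16))⁻¹) = 1
    have h : Equiv.mulRight ((1 : Q16))⁻¹ = Equiv.refl Q16 := by ext x; simp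
    rw [h, FreeGroup.freeGroupCongr_refl]; rfl
  map_mul' a b := by
    show FreeGroup.freeGroupCongr (Equiv.mulRight ((a * b : Q16))⁻¹) =
      FreeGroup.freeGroupCongr (Equiv.mulRight a⁻¹) * FreeGroup.freeGroupCongr (Equiv.mulRight b⁻¹)
    have h : Equiv.mulRight ((a * b : Q16))⁻¹ =
        (Equiv.mulRight b⁻¹).trans (Equiv.mulRight a⁻¹) := by
      ext x; simp [mul_assoc]
    rw [MulAut.mul_def, h, ← FreeGroup.freeGroupCongr_trans]

abbrev Wr : Type := SemidirectProduct (FreeGroup Q16) Q16 actQ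

def theta : FreeGroup (Option ℝ) →* Wr :=
  FreeGroup.lift fun o => Option.elim o
    (SemidirectProduct.inl (FreeGroup.of (1 : Q16)))
    (fun a => SemidirectProduct.inr (FreeGroup.of a))

def pfg (l : List ℝ) : FreeGroup (Option ℝ) := (l.map fun a => FreeGroup.of (some a)).prod

def vfg (l : List ℝ) : FreeGroup (Option ℝ) := (pfg l)⁻¹ * FreeGroup.of none * pfg l

lemma theta_pfg (l : List ℝ) : theta (pfg l) = SemidirectProduct.inr (plist l) := by
  induction l with
  | nil => simp [pfg, plist]
  | cons a l ih =>
      simp only [pfg, plist, List.map_cons, List.prod_cons, _root_.map_mul] at *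
      rw [ih, theta, FreeGroup.lift_apply_of]
      rfl

lemma theta_vfg (l : List ℝ) : theta (vfg l) = SemidirectProduct.inl (FreeGroup.of (plist l)) := by
  have h0 : theta (FreeGroup.of (none : Option ℝ)) =
      SemidirectProduct.inl (FreeGroup.of (1 : Q16)) := by
    rw [theta, FreeGroup.lift_apply_of]
    rfl
  rw [vfg, _root_.map_mul, _root_.map_mul, _root_.map_inv, theta_pfg, h0]
  rw [show ((SemidirectProduct.inr (plist l) : Wr))⁻¹ = SemidirectProduct.inr ((plist l)⁻¹) from (_root_.map_inv _ _).symm,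
    ← SemidirectProduct.inl_aut_inv (φ := actQ) (plist l) (FreeGroup.of (1 : Q16))]
  congr 1
  rw [← _root_.map_inv actQ]
  show FreeGroup.freeGroupCongr (Equiv.mulRight ((plist l)⁻¹)⁻¹) (FreeGroup.of (1 : Q16)) = _
  simp

def psi : FreeGroup (List ℝ) →* FreeGroup (Option ℝ) := FreeGroup.lift vfg

lemma theta_comp_psi :
    theta.comp psi = SemidirectProduct.inl.comp (FreeGroup.map plist) := by
  apply FreeGroup.ext_hom
  intro l
  simp only [MonoidHom.comp_apply, psi, FreeGroup.lift_apply_of, FreeGroup.map.of]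
  exact theta_vfg l

lemma psi_injective : Function.Injective psi := by
  have h : Function.Injective (theta.comp psi) := by
    rw [theta_comp_psi]
    exact (SemidirectProduct.inl_injective).comp (freeGroup_map_injective plist_injective)
  exact Function.Injective.of_comp h

end PfAux


noncomputable section PfMain

variable (S : Set (List ℝ))

abbrev Hgp : Type := FreeGroup {l : List ℝ // l ∈ S}

def phiP : ∀ _ : Bool, Hgp S →* FreeGroup (Option ℝ) :=
  fun _ => psi.comp (FreeGroup.map Subtype.val)

lemma phiP_injective : ∀ i, Function.Injective (phiP S i) := fun _ =>
  psi_injective.comp (freeGroup_map_injective Subtype.val_injective)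

abbrev Pg : Type := Monoid.PushoutI (phiP S)

def fgen : Gen16 → Pg S := fun g =>
  match g with
  | Sum.inl (a, true) => Monoid.PushoutI.of true (FreeGroup.of (some a))
  | Sum.inl (a, false) => Monoid.PushoutI.of false (FreeGroup.of (some a))
  | Sum.inr true => Monoid.PushoutI.of true (FreeGroup.of none)
  | Sum.inr false => Monoid.PushoutI.of false (FreeGroup.of none)

def Nh : FreeGroup Gen16 →* Pg S := FreeGroup.lift (fgen S)

lemma Nh_xprod (l : List ℝ) :
    Nh S ((l.map xgen).prod) = Monoid.PushoutI.of (φ := phiP S) true (pfg l) := by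
  induction l with
  | nil => simp [pfg]
  | cons a l ih =>
      simp only [pfg, List.map_cons, List.prod_cons, _root_.map_mul] at *
      rw [ih, xgen, Nh, FreeGroup.lift_apply_of]
      rfl

lemma Nh_yprod (l : List ℝ) :
    Nh S ((l.map ygen).prod) = Monoid.PushoutI.of (φ := phiP S) false (pfg l) := by
  induction l with
  | nil => simp [pfg]
  | cons a l ih =>
      simp only [pfg, List.map_cons, List.prod_cons, _root_.map_mul] at *
      rw [ih, ygen, Nh, FreeGroup.lift_apply_of]
      rfl

lemma Nh_vword (l : List ℝ) :
    Nh S (vword l) = Monoid.PushoutI.of (φ := phiP S) true (vfg l) := by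
  have hs : Nh S sgen = Monoid.PushoutI.of (φ := phiP S) true (FreeGroup.of none) := by
    rw [sgen, Nh, FreeGroup.lift_apply_of]
    rfl
  rw [vword, _root_.map_mul, _root_.map_mul, _root_.map_inv, Nh_xprod, hs, vfg,
    _root_.map_mul, _root_.map_mul, _root_.map_inv]

lemma Nh_wword (l : List ℝ) :
    Nh S (wword16 l) = Monoid.PushoutI.of (φ := phiP S) false (vfg l) := by
  have ht : Nh S tgen = Monoid.PushoutI.of (φ := phiP S) false (FreeGroup.of none) := by
    rw [tgen, Nh, FreeGroup.lift_apply_of]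
    rfl
  rw [wword16, _root_.map_mul, _root_.map_mul, _root_.map_inv, Nh_yprod, ht, vfg,
    _root_.map_mul, _root_.map_mul, _root_.map_inv]

lemma phiP_of (i : Bool) (l : List ℝ) (hl : l ∈ S) :
    phiP S i (FreeGroup.of (⟨l, hl⟩ : {l : List ℝ // l ∈ S})) = vfg l := by
  show psi (FreeGroup.map Subtype.val (FreeGroup.of _)) = vfg l
  rw [FreeGroup.map.of, psi, FreeGroup.lift_apply_of]

lemma of_vfg_eq_base (i : Bool) (l : List ℝ) (hl : l ∈ S) :
    Monoid.PushoutI.of (φ := phiP S) i (vfg l) =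
      Monoid.PushoutI.base (phiP S) (FreeGroup.of (⟨l, hl⟩ : {l : List ℝ // l ∈ S})) := by
  rw [← phiP_of S i l hl]
  exact Monoid.PushoutI.of_apply_eq_base (phiP S) i _

lemma rels_killed : ∀ g ∈ rels16 S, Nh S g = 1 := by
  rintro g ⟨sb, hsb, rfl⟩
  rw [_root_.map_mul, _root_.map_inv, Nh_vword, Nh_wword,
    of_vfg_eq_base S true sb hsb, of_vfg_eq_base S false sb hsb, mul_inv_cancel]

end PfMain

/-- In the presented group `⟨X | {v_{s̄}·w_{s̄}⁻¹ : s̄ ∈ S}⟩`, the images of `v_{r̄}`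
and `w_{r̄}` coincide if and only if `r̄ ∈ S`. -/
theorem vword_eq_wword_iff_mem (S : Set (List ℝ)) (r : List ℝ) :
    PresentedGroup.mk (rels16 S) (vword r) = PresentedGroup.mk (rels16 S) (wword16 r) ↔
      r ∈ S := by
  constructor
  · intro h
    have hmem : (vword r)⁻¹ * wword16 r ∈ Subgroup.normalClosure (rels16 S) :=
      QuotientGroup.eq.mp h
    have hker : Subgroup.normalClosure (rels16 S) ≤ (Nh S).ker :=
      Subgroup.normalClosure_le_normal fun g hg => rels_killed S g hg
    have heq : Nh S (vword r) = Nh S (wword16 r) := by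
      have h1 := hker hmem
      rw [MonoidHom.mem_ker, _root_.map_mul, _root_.map_inv] at h1
      exact inv_mul_eq_one.mp h1
    rw [Nh_vword, Nh_wword] at heq
    have hrange : Monoid.PushoutI.of (φ := phiP S) true (vfg r) ∈
        (Monoid.PushoutI.of (φ := phiP S) true).range ⊓
          (Monoid.PushoutI.of (φ := phiP S) false).range :=
      ⟨⟨vfg r, rfl⟩, ⟨vfg r, heq.symm⟩⟩
    rw [Monoid.PushoutI.inf_of_range_eq_base_range (phiP_injective S)
      (by decide : (true : Bool) ≠ false)] at hrange
    obtain ⟨h0, hh0⟩ := hrange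
    have h1 : Monoid.PushoutI.of (φ := phiP S) true (phiP S true h0) =
        Monoid.PushoutI.of (φ := phiP S) true (vfg r) := by
      rw [Monoid.PushoutI.of_apply_eq_base]; exact hh0
    have h2 : phiP S true h0 = vfg r :=
      Monoid.PushoutI.of_injective (phiP_injective S) true h1
    have h3 : FreeGroup.map (Subtype.val : {l : List ℝ // l ∈ S} → List ℝ) h0 =
        FreeGroup.of r := by
      apply psi_injective
      have : psi (FreeGroup.map Subtype.val h0) = phiP S true h0 := rfl
      rw [this, h2, psi, FreeGroup.lift_apply_of]
    by_contra hr
    set χ : FreeGroup (List ℝ) →* Multiplicative ℤ :=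
      FreeGroup.lift (fun l => if l = r then Multiplicative.ofAdd (1 : ℤ) else 1) with hχ
    have h4 : χ.comp (FreeGroup.map (Subtype.val : {l : List ℝ // l ∈ S} → List ℝ)) = 1 := by
      apply FreeGroup.ext_hom
      rintro ⟨l, hl⟩
      show χ (FreeGroup.map Subtype.val (FreeGroup.of _)) = 1
      rw [FreeGroup.map.of, hχ, FreeGroup.lift_apply_of, if_neg (fun e : l = r => hr (e ▸ hl))]
    have h5 : χ (FreeGroup.of r) = 1 := by
      rw [← h3]
      exact DFunLike.congr_fun h4 h0
    rw [hχ, FreeGroup.lift_apply_of, if_pos rfl] at h5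
    simp at h5
  · intro hr
    have h1 : vword r * (wword16 r)⁻¹ ∈ Subgroup.normalClosure (rels16 S) :=
      Subgroup.subset_normalClosure ⟨r, hr, rfl⟩
    have h2 : (vword r * (wword16 r)⁻¹)⁻¹ ∈ Subgroup.normalClosure (rels16 S) :=
      (Subgroup.normalClosure (rels16 S)).inv_mem h1
    have h3 := Subgroup.normalClosure_normal (s := rels16 S) |>.conj_mem _ h2 (vword r)⁻¹
    have h4 : (vword r)⁻¹ * (vword r * (wword16 r)⁻¹)⁻¹ * ((vword r)⁻¹)⁻¹ =
        (vword r)⁻¹ * wword16 r := by group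
    rw [h4] at h3
    exact QuotientGroup.eq.mpr h3
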